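/- Let A and B be alphabets, let S be a semigroup, and let φ : A⁺ → S and ψ : B⁺ → S be surjective semigroup homomorphisms. If the fiber product Π(φ,ψ) = {(u,v) ∈ A⁺ × B⁺ : φ(u) = ψ(v)} is finitely generated as a semigroup, then S is 𝒥-trivial: for all s, t ∈ S, if there exist x, y, x', y' ∈ S¹ with s = x·t·y and t = x'·s·y', then s = t. -/

import Mathlib

/-- The fiber product of two semigroup homomorphisms with common codomain,
as a subsemigroup of the direct product. -/
def fiberSubsemigroup {S T F : Type*} [Semigroup S] [Semigroup T] [Semigroup F]
    (φ : S →ₙ* F) (ψ : T →ₙ* F) : Subsemigroup (S × T) where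
  carrier := {p | φ p.1 = ψ p.2}
  mul_mem' := by
    intro a b ha hb
    simp only [Set.mem_setOf_eq, Prod.fst_mul, Prod.snd_mul, map_mul] at *
    rw [ha, hb]

/-- A subsemigroup is finitely generated if it is the closure of a finite subset. -/
def SubsemigroupFG {M : Type*} [Mul M] (P : Subsemigroup M) : Prop :=
  ∃ X : Set M, X.Finite ∧ Subsemigroup.closure X = P

lemma freeSemigroup_length_pos {B : Type*} (x : FreeSemigroup B) : 0 < x.length :=
  Nat.succ_pos _

/-- Core length lemma: a finitely generated fiber subsemigroup cannot contain
pairs with fixed first coordinate and unbounded second coordinate. -/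
lemma core_length {A B S : Type} [Semigroup S]
    (φ : FreeSemigroup A →ₙ* S) (ψ : FreeSemigroup B →ₙ* S)
    (h : SubsemigroupFG (fiberSubsemigroup φ ψ))
    (p : FreeSemigroup A) (w : ℕ → FreeSemigroup B)
    (hw : ∀ n, (p, w n) ∈ fiberSubsemigroup φ ψ)
    (hlen : ∀ n, n ≤ (w n).length) : False := by
  obtain ⟨X, hXfin, hXcl⟩ := h
  set M : ℕ := hXfin.toFinset.sup (fun x => x.2.length) with hM
  have key : ∀ z ∈ Subsemigroup.closure X,
      (z.2 : FreeSemigroup B).length ≤ M * z.1.length := by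
    intro z hz
    induction hz using Subsemigroup.closure_induction with
    | mem x hx =>
        have h1 : x.2.length ≤ M :=
          Finset.le_sup (f := fun x => x.2.length) (hXfin.mem_toFinset.mpr hx)
        calc x.2.length ≤ M * 1 := by simpa using h1
        _ ≤ M * x.1.length :=
          Nat.mul_le_mul_left M (freeSemigroup_length_pos x.1)
    | mul x y _ _ hx hy =>
        have : (x * y).2.length = x.2.length + y.2.length := by
          simp [Prod.snd_mul, FreeSemigroup.length_mul]
        rw [this]
        have : (x * y).1.length = x.1.length + y.1.length := by
          simp [Prod.fst_mul, FreeSemigroup.length_mul]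
        rw [this, Nat.mul_add]
        exact Nat.add_le_add hx hy
  have hmem : (p, w (M * p.length + 1)) ∈ Subsemigroup.closure X := by
    rw [hXcl]; exact hw _
  have h1 := key _ hmem
  have h2 := hlen (M * p.length + 1)
  simp only at h1
  omega

/-- If `s` is fixed by some strictly length-increasing transformation compatible
with `ψ`, the fiber subsemigroup is not finitely generated. -/
lemma aux_pump {A B S : Type} [Semigroup S]
    (φ : FreeSemigroup A →ₙ* S) (ψ : FreeSemigroup B →ₙ* S)
    (hφ : Function.Surjective φ) (hψ : Function.Surjective ψ)
    (h : SubsemigroupFG (fiberSubsemigroup φ ψ))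
    (s : S) (e : FreeSemigroup B → FreeSemigroup B)
    (he1 : ∀ x, ψ x = s → ψ (e x) = s)
    (he2 : ∀ x, x.length < (e x).length) : False := by
  obtain ⟨p, hp⟩ := hφ s
  obtain ⟨q, hq⟩ := hψ s
  set w : ℕ → FreeSemigroup B := fun n => e^[n] q with hw
  have hpsi : ∀ n, ψ (w n) = s := by
    intro n
    induction n with
    | zero => simpa [hw] using hq
    | succ n ih =>
        have : w (n + 1) = e (w n) := Function.iterate_succ_apply' e n q
        rw [this]; exact he1 _ ih
  have hlen : ∀ n, n ≤ (w n).length := by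
    intro n
    induction n with
    | zero => exact Nat.zero_le _
    | succ n ih =>
        have hstep : w (n + 1) = e (w n) := Function.iterate_succ_apply' e n q
        have := he2 (w n)
        rw [hstep]; omega
  exact core_length φ ψ h p w (fun n => by
    show φ p = ψ (w n)
    rw [hp, hpsi n]) hlen

lemma withOne_mul_eq_one {S : Type} [Semigroup S] {a b : WithOne S}
    (hab : a * b = 1) : a = 1 ∧ b = 1 := by
  induction a using WithOne.recOneCoe with
  | one =>
      induction b using WithOne.recOneCoe with
      | one => exact ⟨rfl, rfl⟩
      | coe b => rw [one_mul] at hab; exact absurd hab WithOne.coe_ne_one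
  | coe a =>
      induction b using WithOne.recOneCoe with
      | one => rw [mul_one] at hab; exact absurd hab WithOne.coe_ne_one
      | coe b =>
          rw [← WithOne.coe_mul] at hab
          exact absurd hab WithOne.coe_ne_one

lemma no_fixed {A B S : Type} [Semigroup S]
    (φ : FreeSemigroup A →ₙ* S) (ψ : FreeSemigroup B →ₙ* S)
    (hφ : Function.Surjective φ) (hψ : Function.Surjective ψ)
    (h : SubsemigroupFG (fiberSubsemigroup φ ψ)) (s : S) (u v : WithOne S) :
    (s : WithOne S) = u * (s : WithOne S) * v → u = 1 ∧ v = 1 := by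
  induction u using WithOne.recOneCoe with
  | one =>
      induction v using WithOne.recOneCoe with
      | one => exact fun _ => ⟨rfl, rfl⟩
      | coe v₀ =>
          intro key
          have hsv : s = s * v₀ := by
            rw [one_mul, ← WithOne.coe_mul] at key
            exact WithOne.coe_inj.mp key
          obtain ⟨d, hd⟩ := hψ v₀
          exact absurd (aux_pump φ ψ hφ hψ h s (fun x => x * d)
            (fun x hx => by rw [map_mul, hx, hd, ← hsv])
            (fun x => by
              rw [FreeSemigroup.length_mul]
              have := freeSemigroup_length_pos d
              omega)) not_false
  | coe u₀ =>
      obtain ⟨b, hb⟩ := hψ u₀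
      induction v using WithOne.recOneCoe with
      | one =>
          intro key
          have hsu : s = u₀ * s := by
            rw [mul_one, ← WithOne.coe_mul] at key
            exact WithOne.coe_inj.mp key
          exact absurd (aux_pump φ ψ hφ hψ h s (fun x => b * x)
            (fun x hx => by rw [map_mul, hx, hb, ← hsu])
            (fun x => by
              rw [FreeSemigroup.length_mul]
              have := freeSemigroup_length_pos b
              omega)) not_false
      | coe v₀ =>
          intro key
          have hsuv : s = u₀ * s * v₀ := by
            rw [← WithOne.coe_mul, ← WithOne.coe_mul] at key
            exact WithOne.coe_inj.mp key
          obtain ⟨d, hd⟩ := hψ v₀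
          exact absurd (aux_pump φ ψ hφ hψ h s (fun x => b * x * d)
            (fun x hx => by rw [map_mul, map_mul, hx, hb, hd, ← hsuv])
            (fun x => by
              rw [FreeSemigroup.length_mul, FreeSemigroup.length_mul]
              have := freeSemigroup_length_pos b
              have := freeSemigroup_length_pos d
              omega)) not_false

theorem stmt10 {A B S : Type} [Semigroup S]
    (φ : FreeSemigroup A →ₙ* S) (ψ : FreeSemigroup B →ₙ* S)
    (hφ : Function.Surjective φ) (hψ : Function.Surjective ψ)
    (h : SubsemigroupFG (fiberSubsemigroup φ ψ)) :
    ∀ s t : S,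
      (∃ x y : WithOne S, (s : WithOne S) = x * (t : WithOne S) * y) →
      (∃ x' y' : WithOne S, (t : WithOne S) = x' * (s : WithOne S) * y') →
      s = t := by
  intro s t hst hts
  obtain ⟨x, y, hs⟩ := hst
  obtain ⟨x', y', ht⟩ := hts
  have key : (s : WithOne S) = (x * x') * (s : WithOne S) * (y' * y) := by
    calc (s : WithOne S) = x * (t : WithOne S) * y := hs
    _ = x * (x' * (s : WithOne S) * y') * y := by rw [← ht]
    _ = (x * x') * (s : WithOne S) * (y' * y) := by
        simp only [mul_assoc]
  have hu1 := no_fixed φ ψ hφ hψ h s _ _ key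
  obtain ⟨hx1, hx'1⟩ := withOne_mul_eq_one hu1.1
  obtain ⟨hy'1, hy1⟩ := withOne_mul_eq_one hu1.2
  rw [hx1, hy1, one_mul, mul_one] at hs
  exact WithOne.coe_inj.mp hs
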